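/- For integers t > q ≥ 0, the product C(2q,q)·C(t+1+q,2q+1) is at most (t+1)^{2q+2}/(q!)², and consequently for every integer x ∈ {0,1,…,t}, |D_{q,t}(x)| ≤ (t+1)^{q+1}/q!. -/

import Mathlib

/-- Generalized binomial coefficient `binom(x, i) = x(x-1)⋯(x-i+1)/i!` for real `x`. -/
noncomputable def rbinom (x : ℝ) (i : ℕ) : ℝ :=
  (descPochhammer ℝ i).eval x / i.factorial

/-- The discrete Chebyshev polynomial
`D_{q,t}(x) = Σ_{i=0}^q (−1)^i C(q,i) binom(t−x, q−i) binom(x, i)`. -/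
noncomputable def discreteChebyshev (q t : ℕ) (x : ℝ) : ℝ :=
  ∑ i ∈ Finset.range (q + 1),
    (-1 : ℝ) ^ i * (q.choose i : ℝ) * rbinom ((t : ℝ) - x) (q - i) * rbinom x i

namespace DChebAux

open Finset

/-- Integer version of the discrete Chebyshev polynomial at integer points. -/
def DZ (q t k : ℕ) : ℤ :=
  ∑ i ∈ range (q + 1),
    (-1 : ℤ) ^ i * (q.choose i : ℤ) * ((t - k).choose (q - i) : ℤ) * (k.choose i : ℤ)

/-- The weight `G(m) = C(m,q) C(t+q-m,q)`. -/
def G (q t m : ℕ) : ℤ := (m.choose q : ℤ) * ((t + q - m).choose q : ℤ)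

/-- Minus the forward difference operator. -/
def Sop (f : ℕ → ℤ) : ℕ → ℤ := fun k => f k - f (k + 1)

lemma Sop_iter (f : ℕ → ℤ) (n : ℕ) : ∀ k, Sop^[n] f k
    = ∑ j ∈ range (n + 1), (-1 : ℤ) ^ j * (n.choose j : ℤ) * f (k + j) := by
  induction n with
  | zero => intro k; simp [Sop]
  | succ n ih =>
    intro k
    have h1 : Sop^[n+1] f k = Sop^[n] f k - Sop^[n] f (k+1) := by
      rw [Function.iterate_succ_apply']; rfl
    rw [h1, ih k, ih (k+1)]
    rw [Finset.sum_range_succ' (fun j => (-1 : ℤ) ^ j * ((n+1).choose j : ℤ) * f (k + j)) (n+1)]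
    have expand : ∀ j ∈ range (n+1),
        (-1 : ℤ) ^ (j+1) * (((n+1).choose (j+1) : ℕ) : ℤ) * f (k + (j+1))
        = -((-1 : ℤ) ^ j * (n.choose j : ℤ) * f ((k+1) + j))
          + (-((-1 : ℤ) ^ j * (n.choose (j+1) : ℤ) * f (k + (j+1)))) := by
      intro j hj
      have harg : k + (j+1) = (k+1) + j := by omega
      rw [Nat.choose_succ_succ, harg]
      push_cast
      ring
    rw [Finset.sum_congr rfl expand, Finset.sum_add_distrib]
    have e1 : ∑ j ∈ range (n+1), -((-1 : ℤ) ^ j * (n.choose j : ℤ) * f ((k+1) + j))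
        = -∑ j ∈ range (n+1), (-1 : ℤ) ^ j * (n.choose j : ℤ) * f ((k+1) + j) := by
      rw [Finset.sum_neg_distrib]
    have e2 : ∑ j ∈ range (n+1), -((-1 : ℤ) ^ j * (n.choose (j+1) : ℤ) * f (k + (j+1)))
        = (∑ j ∈ range (n+1), (-1 : ℤ) ^ j * (n.choose j : ℤ) * f (k + j)) - f k := by
      have peel : ∑ j ∈ range (n+1), (-1 : ℤ) ^ j * (n.choose j : ℤ) * f (k + j)
          = (∑ j ∈ range n, (-1 : ℤ) ^ (j+1) * (n.choose (j+1) : ℤ) * f (k + (j+1)))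
            + (-1 : ℤ) ^ 0 * (n.choose 0 : ℤ) * f (k + 0) :=
        Finset.sum_range_succ' _ n
      have ext : ∑ j ∈ range (n+1), (-1 : ℤ) ^ (j+1) * (n.choose (j+1) : ℤ) * f (k + (j+1))
          = ∑ j ∈ range n, (-1 : ℤ) ^ (j+1) * (n.choose (j+1) : ℤ) * f (k + (j+1)) := by
        rw [Finset.sum_range_succ, Nat.choose_succ_self]
        simp
      have step : ∀ j ∈ range (n+1), -((-1 : ℤ) ^ j * (n.choose (j+1) : ℤ) * f (k + (j+1)))
          = (-1 : ℤ) ^ (j+1) * (n.choose (j+1) : ℤ) * f (k + (j+1)) := by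
        intro j _; ring
      rw [Finset.sum_congr rfl step, ext, peel]
      simp
    rw [e1, e2]
    simp only [Nat.choose_zero_right, Nat.cast_one, Nat.add_zero]
    ring

/-- Trinomial revision, symmetric form. -/
lemma trinom (N l u : ℕ) (hl : l ≤ N) :
    N.choose l * (N - l).choose u = N.choose u * (N - u).choose l := by
  by_cases hu : u ≤ N - l
  · have h1 : N.choose l = N.choose (N - l) := (Nat.choose_symm hl).symm
    have h2 : N.choose (N - l) * (N - l).choose u
        = N.choose u * (N - u).choose (N - l - u) :=
      Nat.choose_mul (n := N) hu
    have h3 : N - l - u = (N - u) - l := by omega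
    have h4 : (N - u).choose ((N - u) - l) = (N - u).choose l :=
      Nat.choose_symm (by omega)
    rw [h1, h2, h3, h4]
  · have h1 : (N - l).choose u = 0 := Nat.choose_eq_zero_of_lt (by omega)
    rcases le_or_gt u N with h | h
    · have h2 : (N - u).choose l = 0 := Nat.choose_eq_zero_of_lt (by omega)
      rw [h1, h2]; ring
    · have h2 : N.choose u = 0 := Nat.choose_eq_zero_of_lt h
      rw [h1, h2]; ring

lemma altsum (N u : ℕ) :
    ∑ l ∈ range (N + 1), (-1 : ℤ) ^ l * (N.choose l : ℤ) * ((N - l).choose u : ℤ)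
      = if u = N then 1 else 0 := by
  have key : ∀ l ∈ range (N + 1), (-1 : ℤ) ^ l * (N.choose l : ℤ) * ((N - l).choose u : ℤ)
      = (N.choose u : ℤ) * ((-1 : ℤ) ^ l * ((N - u).choose l : ℤ)) := by
    intro l hl
    have hl' : l ≤ N := by simpa [Nat.lt_succ_iff] using hl
    have := trinom N l u hl'
    have hcast : (N.choose l : ℤ) * ((N - l).choose u : ℤ)
        = (N.choose u : ℤ) * ((N - u).choose l : ℤ) := by exact_mod_cast congrArg (Nat.cast (R := ℤ)) this
    calc (-1 : ℤ) ^ l * (N.choose l : ℤ) * ((N - l).choose u : ℤ)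
        = (-1 : ℤ) ^ l * ((N.choose l : ℤ) * ((N - l).choose u : ℤ)) := by ring
      _ = (-1 : ℤ) ^ l * ((N.choose u : ℤ) * ((N - u).choose l : ℤ)) := by rw [hcast]
      _ = (N.choose u : ℤ) * ((-1 : ℤ) ^ l * ((N - u).choose l : ℤ)) := by ring
  rw [Finset.sum_congr rfl key, ← Finset.mul_sum]
  rcases le_or_gt u N with h | h
  · have hrestrict : ∑ l ∈ range (N + 1), (-1 : ℤ) ^ l * ((N - u).choose l : ℤ)
        = ∑ l ∈ range ((N - u) + 1), (-1 : ℤ) ^ l * ((N - u).choose l : ℤ) := by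
      refine (Finset.sum_subset ?_ ?_).symm
      · intro x hx; simp only [Finset.mem_range] at *; omega
      · intro x _ hx
        simp only [Finset.mem_range, Nat.lt_succ_iff, not_le] at hx
        have : (N - u).choose x = 0 := Nat.choose_eq_zero_of_lt hx
        rw [this]; simp
    rw [hrestrict, Int.alternating_sum_range_choose]
    by_cases huN : u = N
    · subst huN; simp
    · have : N - u ≠ 0 := by omega
      simp [this, huN]
  · have h1 : N.choose u = 0 := Nat.choose_eq_zero_of_lt h
    have h2 : u ≠ N := by omega
    rw [h1]
    simp [h2]

/-- Vandermonde in the convenient orientation. -/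
lemma vander (a b Q : ℕ) : (((a + b).choose Q : ℕ) : ℤ)
    = ∑ i ∈ range (Q + 1), (a.choose (Q - i) : ℤ) * (b.choose i : ℤ) := by
  have h := Nat.add_choose_eq a b Q
  rw [Finset.Nat.sum_antidiagonal_eq_sum_range_succ_mk] at h
  have h2 : ∑ i ∈ range (Q + 1), a.choose (Q - i) * b.choose i
      = ∑ i ∈ range (Q + 1), a.choose i * b.choose (Q - i) := by
    have := Finset.sum_range_reflect (fun i => a.choose i * b.choose (Q - i)) (Q + 1)
    rw [← this]
    refine Finset.sum_congr rfl ?_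
    intro i hi
    have hi' : i ≤ Q := by simpa [Nat.lt_succ_iff] using hi
    have e1 : Q + 1 - 1 - i = Q - i := by omega
    have e2 : Q - (Q - i) = i := by omega
    rw [e1, e2]
  rw [show ∑ i ∈ range (Q + 1), (a.choose (Q - i) : ℤ) * (b.choose i : ℤ)
      = ((∑ i ∈ range (Q + 1), a.choose (Q - i) * b.choose i : ℕ) : ℤ) by push_cast; rfl]
  rw [h2, ← h]

lemma inner_collapse (n i u : ℕ) :
    ∑ r ∈ range (n + 1), (-1 : ℤ) ^ r * (n.choose r : ℤ) * (r.choose i : ℤ) * ((n - r).choose u : ℤ)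
      = if i ≤ n ∧ u = n - i then (-1 : ℤ) ^ i * (n.choose i : ℤ) else 0 := by
  by_cases hin : i ≤ n
  · have h0 : ∑ r ∈ range (n + 1), (-1 : ℤ) ^ r * (n.choose r : ℤ) * (r.choose i : ℤ) * ((n - r).choose u : ℤ)
        = ∑ r ∈ Ico i (n + 1), (-1 : ℤ) ^ r * (n.choose r : ℤ) * (r.choose i : ℤ) * ((n - r).choose u : ℤ) := by
      refine (Finset.sum_subset ?_ ?_).symm
      · intro x hx; simp only [Finset.mem_Ico, Finset.mem_range] at *; omega
      · intro x hx hx'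
        simp only [Finset.mem_range, Finset.mem_Ico, not_and, not_le] at hx hx'
        have : x.choose i = 0 := Nat.choose_eq_zero_of_lt (by omega)
        rw [this]; simp
    rw [h0, Finset.sum_Ico_eq_sum_range]
    have hlen : n + 1 - i = (n - i) + 1 := by omega
    rw [hlen]
    have congr1 : ∀ l ∈ range ((n - i) + 1),
        (-1 : ℤ) ^ (i + l) * (n.choose (i + l) : ℤ) * ((i + l).choose i : ℤ) * ((n - (i + l)).choose u : ℤ)
        = ((-1 : ℤ) ^ i * (n.choose i : ℤ)) * ((-1 : ℤ) ^ l * ((n - i).choose l : ℤ) * ((n - i - l).choose u : ℤ)) := by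
      intro l hl
      have hl' : l ≤ n - i := by simpa [Nat.lt_succ_iff] using hl
      have hkn : i + l ≤ n := by omega
      have hch : n.choose (i + l) * (i + l).choose i = n.choose i * (n - i).choose l := by
        have := Nat.choose_mul (n := n) (Nat.le_add_right i l)
        simpa using this
      have hcast : (n.choose (i + l) : ℤ) * ((i + l).choose i : ℤ)
          = (n.choose i : ℤ) * ((n - i).choose l : ℤ) := by exact_mod_cast congrArg (Nat.cast (R := ℤ)) hch
      have harg : n - (i + l) = n - i - l := by omega
      rw [harg, pow_add]
      calc (-1 : ℤ) ^ i * (-1 : ℤ) ^ l * (n.choose (i + l) : ℤ) * ((i + l).choose i : ℤ) * ((n - i - l).choose u : ℤ)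
          = (-1 : ℤ) ^ i * (-1 : ℤ) ^ l * ((n.choose (i + l) : ℤ) * ((i + l).choose i : ℤ)) * ((n - i - l).choose u : ℤ) := by ring
        _ = (-1 : ℤ) ^ i * (-1 : ℤ) ^ l * ((n.choose i : ℤ) * ((n - i).choose l : ℤ)) * ((n - i - l).choose u : ℤ) := by rw [hcast]
        _ = ((-1 : ℤ) ^ i * (n.choose i : ℤ)) * ((-1 : ℤ) ^ l * ((n - i).choose l : ℤ) * ((n - i - l).choose u : ℤ)) := by ring
    rw [Finset.sum_congr rfl congr1, ← Finset.mul_sum, altsum (n - i) u]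
    by_cases hu : u = n - i
    · simp [hu, hin]
    · simp [hu, hin]
  · have hz : ∀ r ∈ range (n + 1), (-1 : ℤ) ^ r * (n.choose r : ℤ) * (r.choose i : ℤ) * ((n - r).choose u : ℤ) = 0 := by
      intro r hr
      have : r.choose i = 0 := Nat.choose_eq_zero_of_lt (by simp only [Finset.mem_range, Nat.lt_succ_iff] at hr; omega)
      rw [this]; simp
    rw [Finset.sum_eq_zero hz]
    simp [hin]

lemma master (n a b Q : ℕ) :
    ∑ r ∈ range (n + 1), (-1 : ℤ) ^ r * (n.choose r : ℤ) * ((a + r).choose Q : ℤ) * ((b + (n - r)).choose Q : ℤ)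
      = ∑ i ∈ range (Q + 1), (if i ≤ n ∧ n - i ≤ Q then
          (-1 : ℤ) ^ i * (n.choose i : ℤ) * (a.choose (Q - i) : ℤ) * (b.choose (Q - (n - i)) : ℤ) else 0) := by
  have step1 : ∀ r ∈ range (n + 1),
      (-1 : ℤ) ^ r * (n.choose r : ℤ) * ((a + r).choose Q : ℤ) * ((b + (n - r)).choose Q : ℤ)
      = ∑ i ∈ range (Q + 1), ∑ u ∈ range (Q + 1),
          ((a.choose (Q - i) : ℤ) * (b.choose (Q - u) : ℤ))
            * ((-1 : ℤ) ^ r * (n.choose r : ℤ) * (r.choose i : ℤ) * ((n - r).choose u : ℤ)) := by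
    intro r _
    rw [vander a r Q, vander b (n - r) Q]
    rw [show ((-1 : ℤ) ^ r * (n.choose r : ℤ)
          * (∑ i ∈ range (Q + 1), (a.choose (Q - i) : ℤ) * (r.choose i : ℤ)))
          * (∑ u ∈ range (Q + 1), (b.choose (Q - u) : ℤ) * ((n - r).choose u : ℤ))
        = ((-1 : ℤ) ^ r * (n.choose r : ℤ))
          * ((∑ i ∈ range (Q + 1), (a.choose (Q - i) : ℤ) * (r.choose i : ℤ))
            * (∑ u ∈ range (Q + 1), (b.choose (Q - u) : ℤ) * ((n - r).choose u : ℤ))) from by ring]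
    rw [Finset.sum_mul_sum]
    simp only [Finset.mul_sum]
    refine Finset.sum_congr rfl fun i _ => ?_
    refine Finset.sum_congr rfl fun u _ => ?_
    ring
  rw [Finset.sum_congr rfl step1, Finset.sum_comm]
  refine Finset.sum_congr rfl fun i hi => ?_
  rw [Finset.sum_comm]
  have step2 : ∀ u ∈ range (Q + 1),
      ∑ r ∈ range (n + 1), ((a.choose (Q - i) : ℤ) * (b.choose (Q - u) : ℤ))
          * ((-1 : ℤ) ^ r * (n.choose r : ℤ) * (r.choose i : ℤ) * ((n - r).choose u : ℤ))
      = ((a.choose (Q - i) : ℤ) * (b.choose (Q - u) : ℤ))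
          * (if i ≤ n ∧ u = n - i then (-1 : ℤ) ^ i * (n.choose i : ℤ) else 0) := by
    intro u _
    rw [← Finset.mul_sum, inner_collapse]
  rw [Finset.sum_congr rfl step2]
  by_cases hin : i ≤ n
  · by_cases hni : n - i ≤ Q
    · have hmem : n - i ∈ range (Q + 1) := by simp [Nat.lt_succ_iff, hni]
      rw [if_pos ⟨hin, hni⟩]
      rw [Finset.sum_eq_single_of_mem (n - i) hmem]
      · rw [if_pos ⟨hin, rfl⟩]; ring
      · intro u _ hu
        rw [if_neg (by tauto), mul_zero]
    · rw [if_neg (by tauto)]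
      refine Finset.sum_eq_zero fun u hu => ?_
      have : ¬(i ≤ n ∧ u = n - i) := by
        rintro ⟨_, rfl⟩
        simp only [Finset.mem_range, Nat.lt_succ_iff] at hu
        omega
      rw [if_neg this, mul_zero]
  · rw [if_neg (by tauto)]
    refine Finset.sum_eq_zero fun u hu => ?_
    rw [if_neg (by tauto), mul_zero]

lemma neg_one_pow_sub {i q : ℕ} (h : i ≤ q) : (-1 : ℤ) ^ (q - i) = (-1) ^ q * (-1) ^ i := by
  have h1 : (-1 : ℤ) ^ (q - i) * (-1) ^ i = (-1) ^ q := by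
    rw [← pow_add, Nat.sub_add_cancel h]
  have h2 : ((-1 : ℤ) ^ i) * ((-1) ^ i) = 1 := by
    rw [← pow_add]
    exact Even.neg_one_pow ⟨i, rfl⟩
  calc (-1 : ℤ) ^ (q - i) = (-1 : ℤ) ^ (q - i) * (((-1 : ℤ) ^ i) * ((-1) ^ i)) := by rw [h2, mul_one]
    _ = ((-1 : ℤ) ^ (q - i) * (-1) ^ i) * (-1) ^ i := by ring
    _ = (-1) ^ q * (-1) ^ i := by rw [h1]

lemma E_eq (q t k : ℕ) (hk : k ≤ t) :
    Sop^[q] (G q t) k = (-1 : ℤ) ^ q * DZ q t k := by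
  rw [Sop_iter]
  have hG : ∀ r ∈ range (q + 1), (-1 : ℤ) ^ r * (q.choose r : ℤ) * G q t (k + r)
      = (-1 : ℤ) ^ r * (q.choose r : ℤ) * (((k + r).choose q : ℤ) * (((t - k) + (q - r)).choose q : ℤ)) := by
    intro r hr
    have hr' : r ≤ q := by simp only [Finset.mem_range, Nat.lt_succ_iff] at hr; exact hr
    have : t + q - (k + r) = (t - k) + (q - r) := by omega
    unfold G
    rw [this]
  rw [Finset.sum_congr rfl hG]
  have hmaster := master q k (t - k) q
  have lhs_eq : ∑ r ∈ range (q + 1), (-1 : ℤ) ^ r * (q.choose r : ℤ)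
        * (((k + r).choose q : ℤ) * (((t - k) + (q - r)).choose q : ℤ))
      = ∑ r ∈ range (q + 1), (-1 : ℤ) ^ r * (q.choose r : ℤ)
        * ((k + r).choose q : ℤ) * (((t - k) + (q - r)).choose q : ℤ) := by
    refine Finset.sum_congr rfl fun r _ => by ring
  rw [lhs_eq, hmaster]
  have hsimp : ∀ i ∈ range (q + 1),
      (if i ≤ q ∧ q - i ≤ q then
        (-1 : ℤ) ^ i * (q.choose i : ℤ) * (k.choose (q - i) : ℤ) * ((t - k).choose (q - (q - i)) : ℤ) else 0)
      = (-1 : ℤ) ^ i * (q.choose i : ℤ) * (k.choose (q - i) : ℤ) * ((t - k).choose i : ℤ) := by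
    intro i hi
    have hi' : i ≤ q := by simp only [Finset.mem_range, Nat.lt_succ_iff] at hi; exact hi
    rw [if_pos ⟨hi', Nat.sub_le q i⟩]
    have : q - (q - i) = i := by omega
    rw [this]
  rw [Finset.sum_congr rfl hsimp]
  unfold DZ
  rw [Finset.mul_sum, ← Finset.sum_range_reflect]
  refine Finset.sum_congr rfl fun i hi => ?_
  have hi' : i ≤ q := by simp only [Finset.mem_range, Nat.lt_succ_iff] at hi; exact hi
  have e1 : q + 1 - 1 - i = q - i := by omega
  have e2 : q - (q - i) = i := by omega
  rw [e1, e2, Nat.choose_symm hi', neg_one_pow_sub hi']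
  ring

lemma W_eq (q t m : ℕ) (hqm : q ≤ m) (hmt : m ≤ t) :
    Sop^[2 * q] (G q t) (m - q) = (-1 : ℤ) ^ q * ((2 * q).choose q : ℤ) := by
  rw [Sop_iter]
  have hG : ∀ r ∈ range (2 * q + 1), (-1 : ℤ) ^ r * ((2 * q).choose r : ℤ) * G q t ((m - q) + r)
      = (-1 : ℤ) ^ r * ((2 * q).choose r : ℤ)
        * (((m - q) + r).choose q : ℤ) * (((t - m) + (2 * q - r)).choose q : ℤ) := by
    intro r hr
    have hr' : r ≤ 2 * q := by simp only [Finset.mem_range, Nat.lt_succ_iff] at hr; exact hr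
    have : t + q - ((m - q) + r) = (t - m) + (2 * q - r) := by omega
    unfold G
    rw [this]
    ring
  rw [Finset.sum_congr rfl hG, master (2 * q) (m - q) (t - m) q]
  rw [Finset.sum_eq_single_of_mem q (by simp)]
  · rw [if_pos ⟨by omega, by omega⟩]
    have e1 : q - q = 0 := by omega
    have e2 : 2 * q - q = q := by omega
    rw [e2, e1]
    simp
  · intro u hu huq
    have hu' : u ≤ q := by simp only [Finset.mem_range, Nat.lt_succ_iff] at hu; exact hu
    rw [if_neg (by omega)]

lemma sum_sq (q t : ℕ) (hqt : q ≤ t) :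
    ∑ k ∈ range (t + 1), (Sop^[q] (G q t) k) ^ 2
      = ((2 * q).choose q : ℤ) * ∑ m ∈ Ico q (t + 1), G q t m := by
  set E : ℕ → ℤ := Sop^[q] (G q t) with hE
  have expand : ∀ k ∈ range (t + 1), E k ^ 2
      = ∑ j ∈ range (q + 1), (-1 : ℤ) ^ j * (q.choose j : ℤ) * (E k * G q t (k + j)) := by
    intro k _
    have h := Sop_iter (G q t) q k
    calc E k ^ 2 = E k * E k := sq (E k) ▸ rfl
      _ = E k * ∑ j ∈ range (q + 1), (-1 : ℤ) ^ j * (q.choose j : ℤ) * G q t (k + j) := by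
          rw [← h]
      _ = ∑ j ∈ range (q + 1), (-1 : ℤ) ^ j * (q.choose j : ℤ) * (E k * G q t (k + j)) := by
          rw [Finset.mul_sum]
          exact Finset.sum_congr rfl fun j _ => by ring
  rw [Finset.sum_congr rfl expand, Finset.sum_comm]
  have inner1 : ∀ j ∈ range (q + 1),
      ∑ k ∈ range (t + 1), (-1 : ℤ) ^ j * (q.choose j : ℤ) * (E k * G q t (k + j))
      = ∑ m ∈ Ico q (t + 1), (-1 : ℤ) ^ j * (q.choose j : ℤ) * (E (m - j) * G q t m) := by
    intro j hj
    have hj' : j ≤ q := by simp only [Finset.mem_range, Nat.lt_succ_iff] at hj; exact hj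
    have h1 : ∑ m ∈ Ico j (t + 1 + j), (-1 : ℤ) ^ j * (q.choose j : ℤ) * (E (m - j) * G q t m)
        = ∑ k ∈ range (t + 1), (-1 : ℤ) ^ j * (q.choose j : ℤ) * (E k * G q t (k + j)) := by
      rw [Finset.sum_Ico_eq_sum_range]
      have e : t + 1 + j - j = t + 1 := by omega
      rw [e]
      refine Finset.sum_congr rfl fun k _ => ?_
      have e1 : j + k - j = k := by omega
      have e2 : j + k = k + j := by omega
      rw [e1, e2]
    rw [← h1]
    refine (Finset.sum_subset ?_ ?_).symm
    · intro x hx; simp only [Finset.mem_Ico] at *; omega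
    · intro x hx hx'
      simp only [Finset.mem_Ico] at hx
      simp only [Finset.mem_Ico, not_and, not_lt] at hx'
      have hzero : G q t x = 0 := by
        unfold G
        rcases lt_or_ge x q with h | h
        · rw [Nat.choose_eq_zero_of_lt h]; ring
        · have hx2 : t + 1 ≤ x := hx' h
          have : t + q - x < q := by omega
          rw [Nat.choose_eq_zero_of_lt this]; ring
      rw [hzero]; ring
  rw [Finset.sum_congr rfl inner1, Finset.sum_comm]
  have inner2 : ∀ m ∈ Ico q (t + 1),
      ∑ j ∈ range (q + 1), (-1 : ℤ) ^ j * (q.choose j : ℤ) * (E (m - j) * G q t m)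
      = ((2 * q).choose q : ℤ) * G q t m := by
    intro m hm
    simp only [Finset.mem_Ico] at hm
    obtain ⟨hqm, hmt⟩ := hm
    have key : ∑ j ∈ range (q + 1), (-1 : ℤ) ^ j * (q.choose j : ℤ) * E (m - j)
        = ((2 * q).choose q : ℤ) := by
      have refl1 : ∑ j ∈ range (q + 1), (-1 : ℤ) ^ j * (q.choose j : ℤ) * E (m - j)
          = ∑ j ∈ range (q + 1), (-1 : ℤ) ^ q * ((-1 : ℤ) ^ j * (q.choose j : ℤ) * E ((m - q) + j)) := by
        rw [← Finset.sum_range_reflect]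
        refine Finset.sum_congr rfl fun j hj => ?_
        have hj' : j ≤ q := by simp only [Finset.mem_range, Nat.lt_succ_iff] at hj; exact hj
        have e1 : q + 1 - 1 - j = q - j := by omega
        have e2 : m - (q - j) = (m - q) + j := by omega
        rw [e1, e2, Nat.choose_symm hj', neg_one_pow_sub hj']
        ring
      rw [refl1, ← Finset.mul_sum, ← Sop_iter E q (m - q)]
      have hiter : Sop^[q] E (m - q) = Sop^[2 * q] (G q t) (m - q) := by
        rw [hE, ← Function.iterate_add_apply, two_mul]
      rw [hiter, W_eq q t m hqm (by omega)]
      calc (-1 : ℤ) ^ q * ((-1 : ℤ) ^ q * ((2 * q).choose q : ℤ))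
          = ((-1 : ℤ) ^ q * (-1 : ℤ) ^ q) * ((2 * q).choose q : ℤ) := by ring
        _ = ((2 * q).choose q : ℤ) := by
            rw [← pow_add, Even.neg_one_pow ⟨q, rfl⟩, one_mul]
    calc ∑ j ∈ range (q + 1), (-1 : ℤ) ^ j * (q.choose j : ℤ) * (E (m - j) * G q t m)
        = (∑ j ∈ range (q + 1), (-1 : ℤ) ^ j * (q.choose j : ℤ) * E (m - j)) * G q t m := by
          rw [Finset.sum_mul]
          exact Finset.sum_congr rfl fun j _ => by ring
      _ = ((2 * q).choose q : ℤ) * G q t m := by rw [key]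
  rw [Finset.sum_congr rfl inner2, ← Finset.mul_sum]

/-- Hockey stick, range version. -/
lemma hs (M k : ℕ) : ∑ m ∈ range (M + 1), m.choose k = (M + 1).choose (k + 1) := by
  induction M with
  | zero =>
    cases k with
    | zero => simp
    | succ k =>
      simp
      exact (Nat.choose_eq_zero_of_lt (by omega)).symm
  | succ M ih =>
    rw [Finset.sum_range_succ, ih, Nat.choose_succ_succ (M + 1) k]
    simp only [Nat.succ_eq_add_one]
    omega

/-- Vandermonde convolution: `Σ_{m≤N} C(m,j) C(N−m,k) = C(N+1, j+k+1)`. -/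
lemma genV (N : ℕ) : ∀ j k : ℕ,
    ∑ m ∈ range (N + 1), m.choose j * (N - m).choose k = (N + 1).choose (j + k + 1) := by
  induction N with
  | zero =>
    intro j k
    cases j <;> cases k <;> simp [Nat.choose_eq_zero_of_lt]
  | succ N ih =>
    intro j k
    cases j with
    | zero =>
      have e : ∀ m ∈ range (N + 2), m.choose 0 * (N + 1 - m).choose k = (N + 1 - m).choose k := by
        intro m _; simp
      rw [Finset.sum_congr rfl e]
      have refl1 : ∑ m ∈ range (N + 2), (N + 1 - m).choose k = ∑ m ∈ range (N + 2), m.choose k := by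
        have := Finset.sum_range_reflect (fun m => m.choose k) (N + 2)
        rw [← this]
        refine Finset.sum_congr rfl fun m hm => ?_
        have : N + 2 - 1 - m = N + 1 - m := by omega
        rw [this]
      rw [refl1, hs (N + 1) k]
      simp
    | succ j =>
      rw [Finset.sum_range_succ' (fun m => m.choose (j + 1) * (N + 1 - m).choose k) (N + 1)]
      have e : ∀ m ∈ range (N + 1),
          (m + 1).choose (j + 1) * (N + 1 - (m + 1)).choose k
          = m.choose j * (N - m).choose k + m.choose (j + 1) * (N - m).choose k := by
        intro m _
        have e1 : N + 1 - (m + 1) = N - m := by omega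
        rw [e1, Nat.choose_succ_succ]
        ring
      rw [Finset.sum_congr rfl e, Finset.sum_add_distrib, ih j k, ih (j + 1) k]
      simp only [Nat.choose_zero_succ, Nat.zero_mul, Nat.add_zero]
      have e2 : j + 1 + k + 1 = (j + k + 1) + 1 := by omega
      rw [e2, Nat.choose_succ_succ (N + 1) (j + k + 1)]

lemma G_sum (q t : ℕ) (hqt : q ≤ t) :
    ∑ m ∈ Ico q (t + 1), G q t m = ((t + q + 1).choose (2 * q + 1) : ℤ) := by
  have hN : ∑ m ∈ range (t + q + 1), G q t m = ((t + q + 1).choose (2 * q + 1) : ℤ) := by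
    have hgen := genV (t + q) q q
    have e : q + q + 1 = 2 * q + 1 := by omega
    rw [e] at hgen
    have hcast : ∑ m ∈ range (t + q + 1), G q t m
        = ((∑ m ∈ range (t + q + 1), m.choose q * ((t + q - m).choose q) : ℕ) : ℤ) := by
      push_cast; rfl
    rw [hcast, hgen]
  rw [← hN]
  refine Finset.sum_subset ?_ ?_
  · intro x hx
    simp only [Finset.mem_Ico, Finset.mem_range] at *
    omega
  · intro x hx hx'
    simp only [Finset.mem_range] at hx
    simp only [Finset.mem_Ico, not_and, not_lt] at hx'
    unfold G
    rcases lt_or_ge x q with h | h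
    · rw [Nat.choose_eq_zero_of_lt h]; ring
    · have hx2 : t + 1 ≤ x := hx' h
      have : t + q - x < q := by omega
      rw [Nat.choose_eq_zero_of_lt this]; ring

lemma descle (q : ℕ) : ∀ t : ℕ, (t + 1 + q).descFactorial (2 * q + 1) ≤ (t + 1) ^ (2 * q + 1) := by
  induction q with
  | zero => intro t; simp
  | succ q ih =>
    intro t
    have e1 : t + 1 + (q + 1) = (t + 1 + q) + 1 := by omega
    have e2 : 2 * (q + 1) + 1 = (2 * q + 2) + 1 := by omega
    rw [e1, e2, Nat.succ_descFactorial_succ, Nat.descFactorial_succ]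
    have hb : (t + 1 + q + 1) * (t + 1 + q - (2 * q + 1)) ≤ (t + 1) * (t + 1) := by
      rcases le_or_gt t q with h | h
      · have : t + 1 + q - (2 * q + 1) = 0 := by omega
        rw [this]; simp
      · obtain ⟨d, rfl⟩ : ∃ d, t = q + 1 + d := ⟨t - q - 1, by omega⟩
        have e3 : q + 1 + d + 1 + q - (2 * q + 1) = d + 1 := by omega
        rw [e3]
        nlinarith
    calc (t + 1 + q + 1) * ((t + 1 + q - (2 * q + 1)) * (t + 1 + q).descFactorial (2 * q + 1))
        = ((t + 1 + q + 1) * (t + 1 + q - (2 * q + 1))) * (t + 1 + q).descFactorial (2 * q + 1) := by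
          ring
      _ ≤ ((t + 1) * (t + 1)) * (t + 1) ^ (2 * q + 1) := Nat.mul_le_mul hb (ih t)
      _ = (t + 1) ^ (2 * q + 2 + 1) := by ring

lemma part1_nat (q t : ℕ) (h1t : 1 ≤ t) :
    (2 * q).choose q * ((t + 1 + q).choose (2 * q + 1)) * q.factorial ^ 2 ≤ (t + 1) ^ (2 * q + 2) := by
  have hfac : (2 * q).choose q * q.factorial * q.factorial = (2 * q).factorial := by
    have h := Nat.choose_mul_factorial_mul_factorial (show q ≤ 2 * q by omega)
    have e : 2 * q - q = q := by omega
    rw [e] at h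
    exact h
  calc (2 * q).choose q * ((t + 1 + q).choose (2 * q + 1)) * q.factorial ^ 2
      = ((2 * q).choose q * q.factorial * q.factorial) * ((t + 1 + q).choose (2 * q + 1)) := by ring
    _ = (2 * q).factorial * ((t + 1 + q).choose (2 * q + 1)) := by rw [hfac]
    _ ≤ (2 * q + 1).factorial * ((t + 1 + q).choose (2 * q + 1)) :=
        Nat.mul_le_mul_right _ (Nat.factorial_le (by omega))
    _ = (t + 1 + q).descFactorial (2 * q + 1) :=
        (Nat.descFactorial_eq_factorial_mul_choose _ _).symm
    _ ≤ (t + 1) ^ (2 * q + 1) := descle q t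
    _ ≤ (t + 1) ^ (2 * q + 2) := Nat.pow_le_pow_right (by omega) (by omega)

lemma rbinom_nat (n i : ℕ) : rbinom (n : ℝ) i = (n.choose i : ℝ) := by
  unfold rbinom
  have h : (descPochhammer ℝ i).eval (n : ℝ) = ((n.descFactorial i : ℕ) : ℝ) := by
    exact_mod_cast descPochhammer_eval_eq_descFactorial ℝ n i
  rw [h, Nat.descFactorial_eq_factorial_mul_choose]
  have hne : (i.factorial : ℝ) ≠ 0 := Nat.cast_ne_zero.mpr i.factorial_ne_zero
  push_cast
  field_simp

lemma castD (q t x : ℕ) (hx : x ≤ t) : discreteChebyshev q t (x : ℝ) = ((DZ q t x : ℤ) : ℝ) := by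
  unfold discreteChebyshev DZ
  push_cast
  refine Finset.sum_congr rfl fun i hi => ?_
  have h1 : (t : ℝ) - (x : ℝ) = ((t - x : ℕ) : ℝ) := by
    rw [Nat.cast_sub hx]
  rw [h1, rbinom_nat, rbinom_nat]

end DChebAux

open DChebAux Finset in
set_option maxHeartbeats 1600000 in
theorem discreteChebyshev_abs_le (q t : ℕ) (hqt : q < t) :
    ((2 * q).choose q : ℝ) * ((t + 1 + q).choose (2 * q + 1) : ℝ) ≤
        ((t : ℝ) + 1) ^ (2 * q + 2) / (q.factorial : ℝ) ^ 2 ∧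
      ∀ x : ℕ, x ≤ t →
        |discreteChebyshev q t (x : ℝ)| ≤ ((t : ℝ) + 1) ^ (q + 1) / (q.factorial : ℝ) := by
  have h1t : 1 ≤ t := by omega
  have part1R : ((2 * q).choose q : ℝ) * ((t + 1 + q).choose (2 * q + 1) : ℝ) ≤
      ((t : ℝ) + 1) ^ (2 * q + 2) / (q.factorial : ℝ) ^ 2 := by
    rw [le_div_iff₀ (by positivity)]
    have hnat := part1_nat q t h1t
    calc ((2 * q).choose q : ℝ) * ((t + 1 + q).choose (2 * q + 1) : ℝ) * (q.factorial : ℝ) ^ 2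
        = (((2 * q).choose q * ((t + 1 + q).choose (2 * q + 1)) * q.factorial ^ 2 : ℕ) : ℝ) := by
          push_cast; ring
      _ ≤ (((t + 1) ^ (2 * q + 2) : ℕ) : ℝ) := by exact_mod_cast hnat
      _ = ((t : ℝ) + 1) ^ (2 * q + 2) := by push_cast; ring
  refine ⟨part1R, ?_⟩
  intro x hx
  have hsum : ∑ k ∈ range (t + 1), (DZ q t k) ^ 2
      = ((2 * q).choose q : ℤ) * ((t + q + 1).choose (2 * q + 1) : ℤ) := by
    have e : ∀ k ∈ range (t + 1), (DZ q t k) ^ 2 = (Sop^[q] (G q t) k) ^ 2 := by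
      intro k hk
      have hk' : k ≤ t := by simp only [Finset.mem_range, Nat.lt_succ_iff] at hk; exact hk
      rw [E_eq q t k hk', mul_pow]
      have h2 : ((-1 : ℤ) ^ q) ^ 2 = 1 := by
        rw [← pow_mul]
        exact Even.neg_one_pow ⟨q, by ring⟩
      rw [h2, one_mul]
    rw [Finset.sum_congr rfl e, sum_sq q t (by omega), G_sum q t (by omega)]
  have hxmem : x ∈ range (t + 1) := Finset.mem_range.mpr (by omega)
  have hsingle : (DZ q t x) ^ 2 ≤ ∑ k ∈ range (t + 1), (DZ q t k) ^ 2 :=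
    Finset.single_le_sum (f := fun k => (DZ q t k) ^ 2) (fun k _ => sq_nonneg _) hxmem
  set B : ℝ := ((t : ℝ) + 1) ^ (q + 1) / (q.factorial : ℝ) with hB
  have hBnn : 0 ≤ B := by positivity
  have hB2 : B ^ 2 = ((t : ℝ) + 1) ^ (2 * q + 2) / (q.factorial : ℝ) ^ 2 := by
    have e : (q + 1) * 2 = 2 * q + 2 := by ring
    rw [hB, div_pow, ← pow_mul, e]
  have hDx : discreteChebyshev q t (x : ℝ) = ((DZ q t x : ℤ) : ℝ) := castD q t x hx
  have hsq : (discreteChebyshev q t (x : ℝ)) ^ 2 ≤ B ^ 2 := by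
    rw [hDx, hB2]
    have step1 : (((DZ q t x : ℤ) : ℝ)) ^ 2 = (((DZ q t x) ^ 2 : ℤ) : ℝ) := by push_cast; ring
    rw [step1]
    have step2 : (((DZ q t x) ^ 2 : ℤ) : ℝ)
        ≤ ((((2 * q).choose q : ℤ) * ((t + q + 1).choose (2 * q + 1) : ℤ) : ℤ) : ℝ) := by
      have h := hsingle
      rw [hsum] at h
      exact_mod_cast h
    refine step2.trans ?_
    have e : t + q + 1 = t + 1 + q := by omega
    rw [e]
    calc ((((2 * q).choose q : ℤ) * ((t + 1 + q).choose (2 * q + 1) : ℤ) : ℤ) : ℝ)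
        = ((2 * q).choose q : ℝ) * ((t + 1 + q).choose (2 * q + 1) : ℝ) := by push_cast; ring
      _ ≤ ((t : ℝ) + 1) ^ (2 * q + 2) / (q.factorial : ℝ) ^ 2 := part1R
  have h := Real.sqrt_le_sqrt hsq
  rwa [Real.sqrt_sq_eq_abs, Real.sqrt_sq hBnn] at h
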